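/- Let X₁, ..., Xₙ be iid random variables and let an adaptive selection procedure choose indices I₁ = 1, I₂ = i₂(X_{I₁}), ..., I_k = i_k(X_{I₁},...,X_{I_{k-1}}) with all indices distinct, and output ψ(X_{I₁}, ..., X_{I_k}). Then the output has the same distribution as ψ(X₁, ..., X_k). -/

import Mathlib

open MeasureTheory ProbabilityTheory

/-- If `h` is a measurable selector into `Fin n` and each `X i` is measurable, then the
adaptive evaluation `ω ↦ X (h ω) ω` is measurable. -/
lemma measurable_apply_dep {Ω 𝕏 : Type*} [MeasurableSpace Ω] [MeasurableSpace 𝕏]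
    {n : ℕ} (X : Fin n → Ω → 𝕏) (hX : ∀ i, Measurable (X i))
    (h : Ω → Fin n) (hh : Measurable h) : Measurable fun ω => X (h ω) ω := by
  intro s hs
  have heq : (fun ω => X (h ω) ω) ⁻¹' s = ⋃ i, ({ω | h ω = i} ∩ X i ⁻¹' s) := by
    ext ω
    simp only [Set.mem_preimage, Set.mem_iUnion, Set.mem_inter_iff, Set.mem_setOf_eq]
    exact ⟨fun hm => ⟨h ω, rfl, hm⟩, fun ⟨i, hi, hm⟩ => hi ▸ hm⟩
  rw [heq]
  exact MeasurableSet.iUnion fun i => (hh (measurableSet_singleton i)).inter (hX i hs)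

lemma adaptive_I_measurable {Ω 𝕏 : Type*} [MeasurableSpace Ω] [MeasurableSpace 𝕏]
    {n k : ℕ}
    (X : Fin n → Ω → 𝕏) (hXmeas : ∀ i, Measurable (X i))
    (I : Fin k → Ω → Fin n)
    (hadapt : ∀ j : Fin k, ∃ g : (Fin (j : ℕ) → 𝕏) → Fin n, Measurable g ∧
      ∀ ω, I j ω = g (fun l => X (I ⟨(l : ℕ), l.isLt.trans j.isLt⟩ ω) ω)) :
    ∀ j, Measurable (I j) := by
  have main : ∀ t (ht : t < k), Measurable (I ⟨t, ht⟩) := by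
    intro t
    induction t using Nat.strong_induction_on with
    | _ t IH =>
      intro ht
      obtain ⟨g, hg, hspec⟩ := hadapt ⟨t, ht⟩
      have : I ⟨t, ht⟩ = fun ω => g (fun l => X (I ⟨(l : ℕ), l.isLt.trans ht⟩ ω) ω) :=
        funext hspec
      rw [this]
      exact hg.comp (measurable_pi_lambda _ fun l =>
        measurable_apply_dep X hXmeas _ (IH (l : ℕ) l.isLt _))
  exact fun j => main j.1 j.2

theorem adaptive_aux {Ω 𝕏 : Type*} [MeasurableSpace Ω] [MeasurableSpace 𝕏]
    (μ : Measure Ω) [IsProbabilityMeasure μ]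
    (n k : ℕ) (hk : 1 ≤ k) (hkn : k ≤ n)
    (X : Fin n → Ω → 𝕏) (hXmeas : ∀ i, Measurable (X i))
    (hindep : iIndepFun X μ)
    (hident : ∀ i j, Measure.map (X i) μ = Measure.map (X j) μ)
    (I : Fin k → Ω → Fin n)
    (hadapt : ∀ j : Fin k, ∃ g : (Fin (j : ℕ) → 𝕏) → Fin n, Measurable g ∧
      ∀ ω, I j ω = g (fun l => X (I ⟨(l : ℕ), l.isLt.trans j.isLt⟩ ω) ω))
    (hdistinct : ∀ ω, Function.Injective fun j => I j ω) :
    Measure.map (fun ω (j : Fin k) => X (I j ω) ω) μ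
      = Measure.pi (fun _ : Fin k => Measure.map (X ⟨0, Nat.lt_of_lt_of_le hk hkn⟩) μ) := by
  set i0 : Fin n := ⟨0, Nat.lt_of_lt_of_le hk hkn⟩ with hi0
  set ν : Measure 𝕏 := Measure.map (X i0) μ with hν
  haveI : ∀ i : Fin n, IsProbabilityMeasure (Measure.map (X i) μ) :=
    fun i => Measure.isProbabilityMeasure_map (hXmeas i).aemeasurable
  haveI : IsProbabilityMeasure ν := by rw [hν]; infer_instance
  have Imeas : ∀ j, Measurable (I j) := adaptive_I_measurable X hXmeas I hadapt
  have hνval : ∀ (i : Fin n) (s : Set 𝕏), MeasurableSet s → μ (X i ⁻¹' s) = ν s := by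
    intro i s hs
    rw [hν, hident i0 i, Measure.map_apply (hXmeas i) hs]
  -- main induction
  have key : ∀ (m : ℕ) (hm : m ≤ k) (A : Fin m → Set 𝕏), (∀ j, MeasurableSet (A j)) →
      μ {ω | ∀ j : Fin m, X (I (Fin.castLE hm j) ω) ω ∈ A j} = ∏ j, ν (A j) := by
    intro m
    induction m with
    | zero =>
      intro hm A hA
      have : {ω : Ω | ∀ j : Fin 0, X (I (Fin.castLE hm j) ω) ω ∈ A j} = Set.univ := by
        ext ω; simp
      rw [this]
      simp
    | succ m IH =>
      intro hm A hA
      have hm' : m ≤ k := le_trans (Nat.le_succ m) hm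
      set jlast : Fin (m + 1) := Fin.last m with hjlast
      -- the events
      set E : (Fin (m + 1) → Fin n) → Set Ω := fun ι =>
        {ω | (∀ j : Fin (m + 1), I (Fin.castLE hm j) ω = ι j) ∧
             ∀ j : Fin m, X (ι j.castSucc) ω ∈ A j.castSucc} with hE
      set F : (Fin (m + 1) → Fin n) → Set Ω := fun ι =>
        E ι ∩ X (ι jlast) ⁻¹' A jlast with hF
      have hEmeas : ∀ ι, MeasurableSet (E ι) := by
        intro ι
        have h1 : MeasurableSet {ω | ∀ j : Fin (m + 1), I (Fin.castLE hm j) ω = ι j} := by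
          rw [Set.setOf_forall]
          exact MeasurableSet.iInter fun j => Imeas _ (measurableSet_singleton (ι j))
        have h2 : MeasurableSet {ω | ∀ j : Fin m, X (ι j.castSucc) ω ∈ A j.castSucc} := by
          rw [Set.setOf_forall]
          exact MeasurableSet.iInter fun j => hXmeas _ (hA _)
        exact h1.inter h2
      have hFmeas : ∀ ι, MeasurableSet (F ι) :=
        fun ι => (hEmeas ι).inter (hXmeas _ (hA _))
      have hEdisj : Pairwise (Function.onFun Disjoint E) := by
        intro ι ι' hne
        rw [Function.onFun, Set.disjoint_left]
        rintro ω ⟨hJ, -⟩ ⟨hJ', -⟩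
        exact hne (funext fun j => (hJ j).symm.trans (hJ' j))
      have hFdisj : Pairwise (Function.onFun Disjoint F) := by
        intro ι ι' hne
        exact Set.disjoint_of_subset Set.inter_subset_left Set.inter_subset_left
          (hEdisj hne)
      -- the injectivity of the selected indices
      have hJinj : ∀ ω, Function.Injective fun j : Fin (m + 1) => I (Fin.castLE hm j) ω := by
        intro ω j j' h
        exact Fin.castLE_injective hm (hdistinct ω h)
      -- decomposition of the big event
      have hBig : {ω | ∀ j : Fin (m + 1), X (I (Fin.castLE hm j) ω) ω ∈ A j} = ⋃ ι, F ι := by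
        ext ω
        simp only [Set.mem_setOf_eq, Set.mem_iUnion, hF, hE, Set.mem_inter_iff,
          Set.mem_preimage]
        constructor
        · intro h
          exact ⟨fun j => I (Fin.castLE hm j) ω, ⟨⟨fun j => rfl, fun j => h j.castSucc⟩,
            h jlast⟩⟩
        · rintro ⟨ι, ⟨⟨hJ, hAm⟩, hlast⟩⟩
          intro j
          induction j using Fin.lastCases with
          | last => rw [hJ]; exact hlast
          | cast j => rw [hJ]; exact hAm j
      -- per-ι evaluation
      have hFval : ∀ ι, μ (F ι) = μ (E ι) * ν (A jlast) := by
        intro ι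
        by_cases hinj : Function.Injective ι
        · -- the independence argument
          set V : Ω → (Fin m → 𝕏) := fun ω l => X (ι l.castSucc) ω with hVdef
          have hVmeas : Measurable V := measurable_pi_lambda _ fun l => hXmeas _
          set C : Set (Fin m → 𝕏) :=
            {v | (∀ j : Fin m, v j ∈ A j.castSucc) ∧
              ∀ j : Fin (m + 1), (hadapt (Fin.castLE hm j)).choose
                (fun l => v ⟨(l : ℕ),
                  lt_of_lt_of_le l.isLt (Nat.lt_succ_iff.mp j.isLt)⟩) = ι j} with hCdef
          have hCmeas : MeasurableSet C := by
            rw [hCdef, Set.setOf_and]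
            refine MeasurableSet.inter ?_ ?_
            · rw [Set.setOf_forall]
              exact MeasurableSet.iInter fun j => measurable_pi_apply j (hA j.castSucc)
            · rw [Set.setOf_forall]
              refine MeasurableSet.iInter fun j => ?_
              have hg := (hadapt (Fin.castLE hm j)).choose_spec.1
              exact (hg.comp (measurable_pi_lambda _ fun l => measurable_pi_apply _))
                (measurableSet_singleton (ι j))
          have hEeq : E ι = V ⁻¹' C := by
            ext ω
            simp only [hE, Set.mem_setOf_eq, Set.mem_preimage, hCdef]
            constructor
            · rintro ⟨hJ, hAm⟩
              refine ⟨fun j => hAm j, fun j => ?_⟩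
              have hs := (hadapt (Fin.castLE hm j)).choose_spec.2 ω
              have harg : (fun l : Fin ((Fin.castLE hm j : Fin k) : ℕ) =>
                  X (I ⟨(l : ℕ), l.isLt.trans (Fin.castLE hm j).isLt⟩ ω) ω)
                  = fun l : Fin ((Fin.castLE hm j : Fin k) : ℕ) => V ω ⟨(l : ℕ),
                      lt_of_lt_of_le l.isLt (Nat.lt_succ_iff.mp j.isLt)⟩ := by
                funext l
                have hlm1 : (l : ℕ) < m + 1 :=
                  lt_of_lt_of_le l.isLt (Nat.lt_succ_iff.mp j.isLt) |>.trans_le (Nat.le_succ m)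
                have h2 : I (⟨(l : ℕ), lt_of_lt_of_le hlm1 hm⟩ : Fin k) ω
                    = ι ⟨(l : ℕ), hlm1⟩ := hJ ⟨(l : ℕ), hlm1⟩
                exact congrArg (fun i => X i ω) h2
              exact ((hs.trans (congrArg _ harg)).symm).trans (hJ j)
            · rintro ⟨hAm, hg⟩
              have hJ : ∀ (t : ℕ) (ht : t < m + 1),
                  I (Fin.castLE hm ⟨t, ht⟩) ω = ι ⟨t, ht⟩ := by
                intro t
                induction t using Nat.strong_induction_on with
                | _ t IHt =>
                  intro ht
                  have hs := (hadapt (Fin.castLE hm ⟨t, ht⟩)).choose_spec.2 ω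
                  have harg : (fun l : Fin ((Fin.castLE hm (⟨t, ht⟩ : Fin (m+1)) : Fin k) : ℕ) =>
                      X (I ⟨(l : ℕ),
                        l.isLt.trans (Fin.castLE hm (⟨t, ht⟩ : Fin (m+1))).isLt⟩ ω) ω)
                      = fun l : Fin ((Fin.castLE hm (⟨t, ht⟩ : Fin (m+1)) : Fin k) : ℕ) =>
                        V ω ⟨(l : ℕ),
                          lt_of_lt_of_le l.isLt
                            (Nat.lt_succ_iff.mp (⟨t, ht⟩ : Fin (m+1)).isLt)⟩ := by
                    funext l
                    have hlm1 : (l : ℕ) < m + 1 := lt_trans l.isLt ht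
                    have h2 : I (⟨(l : ℕ), lt_of_lt_of_le hlm1 hm⟩ : Fin k) ω
                        = ι ⟨(l : ℕ), hlm1⟩ := IHt (l : ℕ) l.isLt hlm1
                    exact congrArg (fun i => X i ω) h2
                  exact (hs.trans (congrArg _ harg)).trans (hg ⟨t, ht⟩)
              exact ⟨fun j => hJ j.1 j.2, fun j => hAm j⟩
          -- independence of V and the last coordinate
          set S : Finset (Fin n) := Finset.image (fun l : Fin m => ι l.castSucc)
            Finset.univ with hSdef
          set T : Finset (Fin n) := {ι jlast} with hTdef
          have hST : Disjoint S T := by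
            rw [Finset.disjoint_right]
            intro x hxT hxS
            rw [hTdef, Finset.mem_singleton] at hxT
            rw [hSdef, Finset.mem_image] at hxS
            obtain ⟨l, -, hl⟩ := hxS
            have : l.castSucc = jlast := hinj (hl.trans hxT)
            exact (Fin.castSucc_lt_last l).ne (by rw [this])
          have hind := hindep.indepFun_finset S T hST hXmeas
          have hmemS : ∀ l : Fin m, ι l.castSucc ∈ S := by
            intro l; rw [hSdef, Finset.mem_image]; exact ⟨l, Finset.mem_univ l, rfl⟩
          have hmemT : ι jlast ∈ T := by rw [hTdef]; exact Finset.mem_singleton_self _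
          have hφmeas : Measurable fun u : {x // x ∈ S} → 𝕏 =>
              (fun l : Fin m => u ⟨ι l.castSucc, hmemS l⟩) :=
            measurable_pi_lambda _ fun l => measurable_pi_apply _
          have hψfmeas : Measurable fun u : {x // x ∈ T} → 𝕏 => u ⟨ι jlast, hmemT⟩ :=
            measurable_pi_apply _
          have hVindep : IndepFun V (X (ι jlast)) μ := hind.comp hφmeas hψfmeas
          have hmul := indepFun_iff_measure_inter_preimage_eq_mul.1 hVindep C (A jlast)
            hCmeas (hA jlast)
          calc μ (F ι) = μ (V ⁻¹' C ∩ X (ι jlast) ⁻¹' A jlast) := by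
                show μ (E ι ∩ X (ι jlast) ⁻¹' A jlast) = _
                rw [hEeq]
            _ = μ (V ⁻¹' C) * μ (X (ι jlast) ⁻¹' A jlast) := hmul
            _ = μ (E ι) * ν (A jlast) := by rw [← hEeq, hνval _ _ (hA jlast)]
        · have hempty : E ι = ∅ := by
            ext ω
            simp only [hE, Set.mem_setOf_eq, Set.mem_empty_iff_false, iff_false, not_and]
            intro hJ
            exfalso
            obtain ⟨a, b, hab, hne⟩ := Function.not_injective_iff.1 hinj
            exact hne (hJinj ω ((hJ a).trans (hab.trans (hJ b).symm)))
          rw [hF]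
          simp [hempty]
      -- the union of the E's
      have hEunion : (⋃ ι, E ι)
          = {ω | ∀ j : Fin m, X (I (Fin.castLE hm' j) ω) ω ∈ A j.castSucc} := by
        ext ω
        simp only [Set.mem_iUnion, hE, Set.mem_setOf_eq]
        constructor
        · rintro ⟨ι, hJ, hAm⟩ j
          have hcast : Fin.castLE hm' j = Fin.castLE hm j.castSucc := rfl
          rw [hcast, hJ j.castSucc]
          exact hAm j
        · intro h
          refine ⟨fun j => I (Fin.castLE hm j) ω, fun j => rfl, fun j => ?_⟩
          exact h j
      calc μ {ω | ∀ j : Fin (m + 1), X (I (Fin.castLE hm j) ω) ω ∈ A j}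
          = μ (⋃ ι, F ι) := by rw [hBig]
        _ = ∑' ι, μ (F ι) := measure_iUnion hFdisj hFmeas
        _ = ∑ ι : (Fin (m + 1) → Fin n), μ (F ι) := tsum_fintype _
        _ = ∑ ι : (Fin (m + 1) → Fin n), μ (E ι) * ν (A jlast) := by
            exact Finset.sum_congr rfl fun ι _ => hFval ι
        _ = (∑ ι : (Fin (m + 1) → Fin n), μ (E ι)) * ν (A jlast) := by
            rw [Finset.sum_mul]
        _ = (∑' ι, μ (E ι)) * ν (A jlast) := by rw [tsum_fintype]
        _ = μ (⋃ ι, E ι) * ν (A jlast) := by rw [measure_iUnion hEdisj hEmeas]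
        _ = μ {ω | ∀ j : Fin m, X (I (Fin.castLE hm' j) ω) ω ∈ A j.castSucc} * ν (A jlast) := by
            rw [hEunion]
        _ = (∏ j : Fin m, ν (A j.castSucc)) * ν (A jlast) := by
            rw [IH hm' (fun j => A j.castSucc) (fun j => hA _)]
        _ = ∏ j : Fin (m + 1), ν (A j) := (Fin.prod_univ_castSucc fun j => ν (A j)).symm
  -- conclude
  have htuple : Measurable fun ω (j : Fin k) => X (I j ω) ω :=
    measurable_pi_lambda _ fun j => measurable_apply_dep X hXmeas _ (Imeas j)
  refine (Measure.pi_eq fun A hA => ?_).symm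
  rw [Measure.map_apply htuple (MeasurableSet.univ_pi hA)]
  have hpre : (fun ω (j : Fin k) => X (I j ω) ω) ⁻¹' Set.univ.pi A
      = {ω | ∀ j : Fin k, X (I (Fin.castLE le_rfl j) ω) ω ∈ A j} := by
    ext ω
    simp [Set.mem_univ_pi]
  rw [hpre, key k le_rfl A hA]

/-- Adaptively selecting k distinct indices out of n iid observations and applying a
measurable map ψ yields the same distribution as applying ψ to the first k observations. -/
theorem adaptive_selection_iid {Ω 𝕏 𝕏' : Type*} [MeasurableSpace Ω]
    [MeasurableSpace 𝕏] [MeasurableSpace 𝕏']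
    (μ : Measure Ω) [IsProbabilityMeasure μ]
    (n k : ℕ) (hk : 1 ≤ k) (hkn : k ≤ n)
    (X : Fin n → Ω → 𝕏) (hXmeas : ∀ i, Measurable (X i))
    (hindep : iIndepFun X μ)
    (hident : ∀ i j, Measure.map (X i) μ = Measure.map (X j) μ)
    (I : Fin k → Ω → Fin n)
    (hI0 : ∀ ω, I ⟨0, hk⟩ ω = ⟨0, lt_of_lt_of_le hk hkn⟩)
    (hadapt : ∀ j : Fin k, ∃ g : (Fin (j : ℕ) → 𝕏) → Fin n, Measurable g ∧
      ∀ ω, I j ω = g (fun l => X (I ⟨(l : ℕ), l.isLt.trans j.isLt⟩ ω) ω))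
    (hdistinct : ∀ ω, Function.Injective fun j => I j ω)
    (ψ : (Fin k → 𝕏) → 𝕏') (hψ : Measurable ψ) :
    Measure.map (fun ω => ψ fun j => X (I j ω) ω) μ
      = Measure.map (fun ω => ψ fun j : Fin k => X (Fin.castLE hkn j) ω) μ := by
  have Imeas : ∀ j, Measurable (I j) := adaptive_I_measurable X hXmeas I hadapt
  have htuple1 : Measurable fun ω (j : Fin k) => X (I j ω) ω :=
    measurable_pi_lambda _ fun j => measurable_apply_dep X hXmeas _ (Imeas j)
  have htuple2 : Measurable fun ω (j : Fin k) => X (Fin.castLE hkn j) ω :=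
    measurable_pi_lambda _ fun j => hXmeas _
  have h1 := adaptive_aux μ n k hk hkn X hXmeas hindep hident I hadapt hdistinct
  have h2 := adaptive_aux μ n k hk hkn X hXmeas hindep hident (fun j _ => Fin.castLE hkn j)
    (fun j => ⟨fun _ => Fin.castLE hkn j, measurable_const, fun ω => rfl⟩)
    (fun ω a b h => Fin.castLE_injective hkn h)
  calc Measure.map (fun ω => ψ fun j => X (I j ω) ω) μ
      = Measure.map ψ (Measure.map (fun ω (j : Fin k) => X (I j ω) ω) μ) :=
        (Measure.map_map hψ htuple1).symm
    _ = Measure.map ψ (Measure.map (fun ω (j : Fin k) => X (Fin.castLE hkn j) ω) μ) := by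
        rw [h1, h2]
    _ = Measure.map (fun ω => ψ fun j : Fin k => X (Fin.castLE hkn j) ω) μ :=
        Measure.map_map hψ htuple2
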